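/- arXiv:2303.14689 — 7 statements merged into one kernel-verified Lean document; each statement's English description precedes it below -/
import Mathlib

section
/- Let λ ∈ [0,1) and θ₁, θ₂ ∈ [0,1]. Define F_λ(θ₁,θ₂) = artanh( λ(θ₁+θ₂) / (1 + λθ₁θ₂) ). Then (1/2)·(F_λ(θ₁,θ₂) + F_λ(θ₁,−θ₂)) ≤ F_λ(θ₁,0), i.e. artanh( λ(θ₁+θ₂)/(1+λθ₁θ₂) ) + artanh( λ(θ₁−θ₂)/(1−λθ₁θ₂) ) ≤ 2·artanh(λθ₁). -/
/-- The real inverse hyperbolic tangent, `artanh x = ½ · log((1+x)/(1−x))`. -/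
noncomputable def artanh (x : ℝ) : ℝ := (1 / 2) * Real.log ((1 + x) / (1 - x))

/-- Lemma 3.2: for `λ ∈ [0,1)` and `θ₁, θ₂ ∈ [0,1]`,
`artanh(λ(θ₁+θ₂)/(1+λθ₁θ₂)) + artanh(λ(θ₁−θ₂)/(1−λθ₁θ₂)) ≤ 2·artanh(λθ₁)`. -/
theorem stmt0 (lam θ₁ θ₂ : ℝ) (hlam : lam ∈ Set.Ico (0 : ℝ) 1)
    (hθ₁ : θ₁ ∈ Set.Icc (0 : ℝ) 1) (hθ₂ : θ₂ ∈ Set.Icc (0 : ℝ) 1) :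
    artanh (lam * (θ₁ + θ₂) / (1 + lam * θ₁ * θ₂))
      + artanh (lam * (θ₁ - θ₂) / (1 - lam * θ₁ * θ₂))
      ≤ 2 * artanh (lam * θ₁) := by
  obtain ⟨hl0, hl1⟩ := hlam
  obtain ⟨h10, h11⟩ := hθ₁
  obtain ⟨h20, h21⟩ := hθ₂
  have hu0 : 0 ≤ lam * θ₁ := mul_nonneg hl0 h10
  have hu1 : lam * θ₁ < 1 := lt_of_le_of_lt (by nlinarith) hl1
  have hv0 : 0 ≤ lam * θ₂ := mul_nonneg hl0 h20
  have hv1 : lam * θ₂ < 1 := lt_of_le_of_lt (by nlinarith) hl1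
  have hw0 : 0 ≤ lam * θ₁ * θ₂ := mul_nonneg hu0 h20
  have hw1 : lam * θ₁ * θ₂ < 1 := lt_of_le_of_lt (by nlinarith) hl1
  have hA1 : (0:ℝ) < 1 + lam * θ₁ * θ₂ + lam * θ₁ + lam * θ₂ := by linarith
  have hA2 : (0:ℝ) < 1 + lam * θ₁ * θ₂ - lam * θ₁ - lam * θ₂ := by nlinarith
  have hB1 : (0:ℝ) < 1 - lam * θ₁ * θ₂ + lam * θ₁ - lam * θ₂ := by nlinarith
  have hB2 : (0:ℝ) < 1 - lam * θ₁ * θ₂ - lam * θ₁ + lam * θ₂ := by nlinarith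
  have hden1 : (0:ℝ) < 1 + lam * θ₁ * θ₂ := by linarith
  have hden2 : (0:ℝ) < 1 - lam * θ₁ * θ₂ := by linarith
  have e1 : (1 + lam * (θ₁ + θ₂) / (1 + lam * θ₁ * θ₂))
        / (1 - lam * (θ₁ + θ₂) / (1 + lam * θ₁ * θ₂))
      = (1 + lam * θ₁ * θ₂ + lam * θ₁ + lam * θ₂)
        / (1 + lam * θ₁ * θ₂ - lam * θ₁ - lam * θ₂) := by
    have ha2 : 0 < 1 - lam * (θ₁ + θ₂) / (1 + lam * θ₁ * θ₂) := by
      rw [sub_pos, div_lt_one hden1]; linarith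
    rw [div_eq_div_iff ha2.ne' hA2.ne']
    field_simp
    ring
  have e2 : (1 + lam * (θ₁ - θ₂) / (1 - lam * θ₁ * θ₂))
        / (1 - lam * (θ₁ - θ₂) / (1 - lam * θ₁ * θ₂))
      = (1 - lam * θ₁ * θ₂ + lam * θ₁ - lam * θ₂)
        / (1 - lam * θ₁ * θ₂ - lam * θ₁ + lam * θ₂) := by
    have hb2 : 0 < 1 - lam * (θ₁ - θ₂) / (1 - lam * θ₁ * θ₂) := by
      rw [sub_pos, div_lt_one hden2]; linarith
    rw [div_eq_div_iff hb2.ne' hB2.ne']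
    field_simp
    ring
  simp only [artanh, e1, e2]
  set X := (1 + lam * θ₁ * θ₂ + lam * θ₁ + lam * θ₂)
        / (1 + lam * θ₁ * θ₂ - lam * θ₁ - lam * θ₂) with hX
  set Y := (1 - lam * θ₁ * θ₂ + lam * θ₁ - lam * θ₂)
        / (1 - lam * θ₁ * θ₂ - lam * θ₁ + lam * θ₂) with hY
  have hXpos : 0 < X := div_pos hA1 hA2
  have hYpos : 0 < Y := div_pos hB1 hB2
  have key : X * Y ≤ ((1 + lam * θ₁) / (1 - lam * θ₁)) ^ 2 := by
    rw [hX, hY, div_mul_div_comm, div_pow,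
      div_le_div_iff₀ (mul_pos hA2 hB2) (pow_pos (by linarith) 2)]
    nlinarith [mul_nonneg
      (show (0:ℝ) ≤ lam * θ₂ - lam * θ₁ * (lam * θ₁ * θ₂) by nlinarith)
      (show (0:ℝ) ≤ lam * θ₁ * θ₂ - lam * θ₁ * (lam * θ₂) by nlinarith)]
  have hlog : Real.log X + Real.log Y
      ≤ 2 * Real.log ((1 + lam * θ₁) / (1 - lam * θ₁)) := by
    rw [← Real.log_mul hXpos.ne' hYpos.ne']
    calc Real.log (X * Y) ≤ Real.log (((1 + lam * θ₁) / (1 - lam * θ₁)) ^ 2) :=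
          Real.log_le_log (mul_pos hXpos hYpos) key
      _ = 2 * Real.log ((1 + lam * θ₁) / (1 - lam * θ₁)) := by
          rw [Real.log_pow]; norm_num
  linarith
end

section
/- Let λ ∈ (0,1) and θ₁, θ₂ ∈ (0,1]. Define F_λ(θ₁,θ₂) = artanh( λ(θ₁+θ₂) / (1 + λθ₁θ₂) ). Then the inequality (1/2)·(F_λ(θ₁,θ₂) + F_λ(θ₁,−θ₂)) ≤ F_λ(θ₁,0) is strict: artanh( λ(θ₁+θ₂)/(1+λθ₁θ₂) ) + artanh( λ(θ₁−θ₂)/(1−λθ₁θ₂) ) < 2·artanh(λθ₁). -/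
set_option maxHeartbeats 1000000 in
/-- Strictness claim of Lemma 3.2: for `λ ∈ (0,1)` and `θ₁, θ₂ ∈ (0,1]`,
`artanh(λ(θ₁+θ₂)/(1+λθ₁θ₂)) + artanh(λ(θ₁−θ₂)/(1−λθ₁θ₂)) < 2·artanh(λθ₁)`. -/
theorem stmt1 (lam θ₁ θ₂ : ℝ) (hlam : lam ∈ Set.Ioo (0 : ℝ) 1)
    (hθ₁ : θ₁ ∈ Set.Ioc (0 : ℝ) 1) (hθ₂ : θ₂ ∈ Set.Ioc (0 : ℝ) 1) :
    artanh (lam * (θ₁ + θ₂) / (1 + lam * θ₁ * θ₂))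
      + artanh (lam * (θ₁ - θ₂) / (1 - lam * θ₁ * θ₂))
      < 2 * artanh (lam * θ₁) := by
  obtain ⟨hl0, hl1⟩ := hlam
  obtain ⟨h10, h11⟩ := hθ₁
  obtain ⟨h20, h21⟩ := hθ₂
  have ha0 : 0 < lam * θ₁ := mul_pos hl0 h10
  have ha1 : lam * θ₁ < 1 := by nlinarith [mul_le_of_le_one_right hl0.le h11]
  have hm : lam * θ₁ * θ₂ < 1 := by nlinarith [mul_le_of_le_one_right ha0.le h21]
  have hm0 : 0 < lam * θ₁ * θ₂ := by positivity
  have hd1 : (0:ℝ) < 1 + lam * θ₁ * θ₂ := by linarith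
  have hd2 : (0:ℝ) < 1 - lam * θ₁ * θ₂ := by linarith
  have hN1 : (0:ℝ) < 1 + lam * θ₁ * θ₂ + lam * (θ₁ + θ₂) := by nlinarith
  have hD1 : (0:ℝ) < 1 + lam * θ₁ * θ₂ - lam * (θ₁ + θ₂) := by
    nlinarith [mul_nonneg (mul_nonneg hl0.le (sub_nonneg.2 h11)) (sub_nonneg.2 h21)]
  have hN2 : (0:ℝ) < 1 - lam * θ₁ * θ₂ + lam * (θ₁ - θ₂) := by
    nlinarith [mul_nonneg (mul_pos hl0 h20).le (sub_nonneg.2 h11)]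
  have hD2 : (0:ℝ) < 1 - lam * θ₁ * θ₂ - lam * (θ₁ - θ₂) := by
    nlinarith [mul_nonneg (mul_pos hl0 h20).le (sub_nonneg.2 h11)]
  unfold artanh
  have hb1 : 1 - lam * (θ₁ + θ₂) / (1 + lam * θ₁ * θ₂) ≠ 0 := by
    have : 1 - lam * (θ₁ + θ₂) / (1 + lam * θ₁ * θ₂)
        = (1 + lam * θ₁ * θ₂ - lam * (θ₁ + θ₂)) / (1 + lam * θ₁ * θ₂) := by
      field_simp
    rw [this]
    exact (div_pos hD1 hd1).ne'
  have hb2 : 1 - lam * (θ₁ - θ₂) / (1 - lam * θ₁ * θ₂) ≠ 0 := by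
    have : 1 - lam * (θ₁ - θ₂) / (1 - lam * θ₁ * θ₂)
        = (1 - lam * θ₁ * θ₂ - lam * (θ₁ - θ₂)) / (1 - lam * θ₁ * θ₂) := by
      field_simp
    rw [this]
    exact (div_pos hD2 hd2).ne'
  have e1 : (1 + lam * (θ₁ + θ₂) / (1 + lam * θ₁ * θ₂)) / (1 - lam * (θ₁ + θ₂) / (1 + lam * θ₁ * θ₂))
      = (1 + lam * θ₁ * θ₂ + lam * (θ₁ + θ₂)) / (1 + lam * θ₁ * θ₂ - lam * (θ₁ + θ₂)) := by
    rw [div_eq_div_iff hb1 hD1.ne']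
    field_simp
  have e2 : (1 + lam * (θ₁ - θ₂) / (1 - lam * θ₁ * θ₂)) / (1 - lam * (θ₁ - θ₂) / (1 - lam * θ₁ * θ₂))
      = (1 - lam * θ₁ * θ₂ + lam * (θ₁ - θ₂)) / (1 - lam * θ₁ * θ₂ - lam * (θ₁ - θ₂)) := by
    rw [div_eq_div_iff hb2 hD2.ne']
    field_simp
  rw [e1, e2]
  set R1 := (1 + lam * θ₁ * θ₂ + lam * (θ₁ + θ₂)) / (1 + lam * θ₁ * θ₂ - lam * (θ₁ + θ₂)) with hR1
  set R2 := (1 - lam * θ₁ * θ₂ + lam * (θ₁ - θ₂)) / (1 - lam * θ₁ * θ₂ - lam * (θ₁ - θ₂)) with hR2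
  have hR1pos : 0 < R1 := div_pos hN1 hD1
  have hR2pos : 0 < R2 := div_pos hN2 hD2
  have hr : (0:ℝ) < (1 + lam * θ₁) / (1 - lam * θ₁) := by
    apply div_pos <;> linarith
  have key : R1 * R2 < ((1 + lam * θ₁) / (1 - lam * θ₁)) ^ 2 := by
    rw [hR1, hR2, div_mul_div_comm, div_pow,
      div_lt_div_iff₀ (mul_pos hD1 hD2) (pow_pos (by linarith) 2)]
    have hsq : (1 + lam * θ₁) * (1 - θ₁) < (1 - lam * θ₁) * (1 + θ₁) := by
      nlinarith [mul_lt_mul_of_pos_right hl1 h10]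
    have h0 : 0 ≤ (1 + lam * θ₁) * (1 - θ₁) :=
      mul_nonneg (by linarith) (by linarith)
    have hsq2 : ((1 + lam * θ₁) * (1 - θ₁)) ^ 2 < ((1 - lam * θ₁) * (1 + θ₁)) ^ 2 :=
      pow_lt_pow_left₀ hsq h0 (by norm_num)
    nlinarith [mul_lt_mul_of_pos_left hsq2 (show (0:ℝ) < lam ^ 2 * θ₂ ^ 2 by positivity)]
  calc 1 / 2 * Real.log R1 + 1 / 2 * Real.log R2
      = 1 / 2 * Real.log (R1 * R2) := by
        rw [Real.log_mul hR1pos.ne' hR2pos.ne']; ring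
    _ < 1 / 2 * Real.log (((1 + lam * θ₁) / (1 - lam * θ₁)) ^ 2) := by
        have := Real.log_lt_log (by positivity) key
        linarith
    _ = 2 * (1 / 2 * Real.log ((1 + lam * θ₁) / (1 - lam * θ₁))) := by
        rw [Real.log_pow]; push_cast; ring
end

section
/- Let λ ∈ [0,1] and θ₁, θ₂ ∈ [0,1). Then λ·( (1/2)(θ₁+θ₂)·artanh( λ(θ₁+θ₂)/(1+λθ₁θ₂) ) + (1/2)(θ₁−θ₂)·artanh( λ(θ₁−θ₂)/(1−λθ₁θ₂) ) ) ≤ λ²·( θ₁·artanh(θ₁) + θ₂·artanh(θ₂) ). -/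
lemma artanh_neg (x : ℝ) : artanh (-x) = - artanh x := by
  unfold artanh
  rw [show (1 + -x) = 1 - x from by ring, show (1 - -x) = 1 + x from by ring,
    show (1 - x) / (1 + x) = ((1 + x) / (1 - x))⁻¹ from (inv_div _ _).symm,
    Real.log_inv]
  ring

lemma artanh_le_artanh {u v : ℝ} (hu : 0 ≤ u) (huv : u ≤ v) (hv : v < 1) :
    artanh u ≤ artanh v := by
  have h1 : (0:ℝ) < 1 - v := by linarith
  have h2 : (0:ℝ) < 1 - u := by linarith
  have h3 : (0:ℝ) < 1 + u := by linarith
  unfold artanh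
  have hle : (1 + u) / (1 - u) ≤ (1 + v) / (1 - v) := by
    rw [div_le_div_iff₀ h2 h1]; nlinarith
  have hlog := Real.log_le_log (by positivity) hle
  linarith

lemma artanh_add {a b : ℝ} (ha1 : -1 < a) (ha2 : a < 1) (hb1 : -1 < b) (hb2 : b < 1) :
    artanh a + artanh b = artanh ((a + b) / (1 + a * b)) := by
  have h1 : (0:ℝ) < 1 + a := by linarith
  have h2 : (0:ℝ) < 1 - a := by linarith
  have h3 : (0:ℝ) < 1 + b := by linarith
  have h4 : (0:ℝ) < 1 - b := by linarith
  have h5 : (0:ℝ) < 1 + a * b := by nlinarith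
  unfold artanh
  rw [← mul_add, ← Real.log_mul (by positivity) (by positivity)]
  congr 2
  have hnum : 1 + (a + b) / (1 + a * b) = (1 + a) * (1 + b) / (1 + a * b) := by
    field_simp; ring
  have hden : 1 - (a + b) / (1 + a * b) = (1 - a) * (1 - b) / (1 + a * b) := by
    field_simp; ring
  rw [hnum, hden, div_div_div_cancel_right₀]
  · rw [div_mul_div_comm]
  all_goals positivity

/-- auxiliary smooth version of artanh -/
noncomputable def atg (x : ℝ) : ℝ := (1 / 2) * (Real.log (1 + x) - Real.log (1 - x))

lemma artanh_eq_atg {x : ℝ} (h1 : -1 < x) (h2 : x < 1) : artanh x = atg x := by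
  unfold artanh atg
  rw [Real.log_div (by linarith) (by linarith)]

lemma atg_hasDeriv {x : ℝ} (h1 : -1 < x) (h2 : x < 1) :
    HasDerivAt atg (1 / (1 - x ^ 2)) x := by
  have ha : (1:ℝ) + x ≠ 0 := by linarith
  have hb : (1:ℝ) - x ≠ 0 := by linarith
  have hd1 : HasDerivAt (fun y : ℝ => Real.log (1 + y)) (1 / (1 + x)) x := by
    simpa using ((hasDerivAt_id x).const_add 1).log ha
  have hd2 : HasDerivAt (fun y : ℝ => Real.log (1 - y)) ((-1) / (1 - x)) x := by
    simpa using ((hasDerivAt_id x).const_sub 1).log hb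
  have hc : (1:ℝ) - x ^ 2 ≠ 0 := by nlinarith
  have := ((hd1.sub hd2).const_mul ((1:ℝ)/2))
  convert this using 1
  · rfl
  · rfl
  · rfl
  field_simp
  ring

lemma atg_convex : ConvexOn ℝ (Set.Ico (0:ℝ) 1) atg := by
  have hint : interior (Set.Ico (0:ℝ) 1) = Set.Ioo 0 1 := interior_Ico
  apply MonotoneOn.convexOn_of_deriv (convex_Ico 0 1)
  · intro x hx
    exact (atg_hasDeriv (by linarith [hx.1]) hx.2).continuousAt.continuousWithinAt
  · rw [hint]
    intro x hx
    exact (atg_hasDeriv (by linarith [hx.1]) hx.2).differentiableAt.differentiableWithinAt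
  · rw [hint]
    intro x hx y hy hxy
    rw [(atg_hasDeriv (by linarith [hx.1]) hx.2).deriv,
        (atg_hasDeriv (by linarith [hy.1]) hy.2).deriv]
    have hx2 : x ^ 2 ≤ y ^ 2 := pow_le_pow_left₀ hx.1.le hxy 2
    apply one_div_le_one_div_of_le (by nlinarith [hy.1, hy.2]) (by linarith)

lemma artanh_scale {x l : ℝ} (hx0 : 0 ≤ x) (hx1 : x < 1) (hl0 : 0 ≤ l) (hl1 : l ≤ 1) :
    artanh (l * x) ≤ l * artanh x := by
  have h0 : (0:ℝ) ∈ Set.Ico (0:ℝ) 1 := ⟨le_refl 0, one_pos⟩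
  have hx : x ∈ Set.Ico (0:ℝ) 1 := ⟨hx0, hx1⟩
  have key := atg_convex.2 hx h0 hl0 (by linarith) (by ring : l + (1 - l) = 1)
  simp only [smul_eq_mul, mul_zero, add_zero] at key
  have hlx0 : 0 ≤ l * x := mul_nonneg hl0 hx0
  have hlx1 : l * x < 1 := by nlinarith
  have hatg0 : atg 0 = 0 := by unfold atg; norm_num
  rw [hatg0, mul_zero, add_zero] at key
  rw [artanh_eq_atg (by linarith) hlx1, artanh_eq_atg (by linarith) hx1]
  exact key

lemma key_lemma (lam θ₁ θ₂ : ℝ) (hl0 : 0 ≤ lam) (hl1 : lam ≤ 1)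
    (h10 : 0 ≤ θ₁) (h11 : θ₁ < 1) (h20 : 0 ≤ θ₂) (h21 : θ₂ < 1) (hord : θ₂ ≤ θ₁) :
    lam * ((1 / 2) * (θ₁ + θ₂) * artanh (lam * (θ₁ + θ₂) / (1 + lam * θ₁ * θ₂))
        + (1 / 2) * (θ₁ - θ₂) * artanh (lam * (θ₁ - θ₂) / (1 - lam * θ₁ * θ₂)))
      ≤ lam ^ 2 * (θ₁ * artanh θ₁ + θ₂ * artanh θ₂) := by
  have hl1t : lam * θ₁ < 1 := by nlinarith
  have hl2t : lam * θ₂ < 1 := by nlinarith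
  have hl1t0 : 0 ≤ lam * θ₁ := mul_nonneg hl0 h10
  have hl2t0 : 0 ≤ lam * θ₂ := mul_nonneg hl0 h20
  have hp0 : 0 ≤ lam * θ₁ * θ₂ := mul_nonneg hl1t0 h20
  have hp1 : lam * θ₁ * θ₂ < 1 := by nlinarith
  have hpp0 : 0 ≤ θ₁ * θ₂ := mul_nonneg h10 h20
  have hpp1 : θ₁ * θ₂ < 1 := by nlinarith
  set A := artanh θ₁ with hA
  set B := artanh θ₂ with hB
  -- plus term
  have plus : artanh (lam * (θ₁ + θ₂) / (1 + lam * θ₁ * θ₂)) ≤ lam * A + lam * B := by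
    have step1 : artanh (lam * (θ₁ + θ₂) / (1 + lam * θ₁ * θ₂))
        ≤ artanh ((lam * θ₁ + lam * θ₂) / (1 + lam * θ₁ * (lam * θ₂))) := by
      apply artanh_le_artanh
      · positivity
      · rw [show lam * θ₁ + lam * θ₂ = lam * (θ₁ + θ₂) from by ring]
        apply div_le_div_of_nonneg_left (by positivity) (by positivity)
        nlinarith
      · rw [div_lt_one (by positivity)]
        nlinarith [(1 - lam * θ₁) * (1 - lam * θ₂)]
    have step2 : artanh ((lam * θ₁ + lam * θ₂) / (1 + lam * θ₁ * (lam * θ₂)))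
        = artanh (lam * θ₁) + artanh (lam * θ₂) :=
      (artanh_add (by linarith) hl1t (by linarith) hl2t).symm
    have step3 : artanh (lam * θ₁) ≤ lam * A := artanh_scale h10 h11 hl0 hl1
    have step4 : artanh (lam * θ₂) ≤ lam * B := artanh_scale h20 h21 hl0 hl1
    calc artanh (lam * (θ₁ + θ₂) / (1 + lam * θ₁ * θ₂))
        ≤ artanh ((lam * θ₁ + lam * θ₂) / (1 + lam * θ₁ * (lam * θ₂))) := step1
      _ = artanh (lam * θ₁) + artanh (lam * θ₂) := step2
      _ ≤ lam * A + lam * B := add_le_add step3 step4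
  -- minus term
  have hdnum : 0 ≤ θ₁ - θ₂ := by linarith
  have hdlt : (θ₁ - θ₂) / (1 - θ₁ * θ₂) < 1 := by
    rw [div_lt_one (by linarith)]
    nlinarith [(1 - θ₁) * (1 + θ₂)]
  have hd0 : 0 ≤ (θ₁ - θ₂) / (1 - θ₁ * θ₂) := div_nonneg hdnum (by linarith)
  have minus : artanh (lam * (θ₁ - θ₂) / (1 - lam * θ₁ * θ₂)) ≤ lam * (A - B) := by
    have m1 : artanh (lam * (θ₁ - θ₂) / (1 - lam * θ₁ * θ₂))
        ≤ artanh (lam * ((θ₁ - θ₂) / (1 - θ₁ * θ₂))) := by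
      apply artanh_le_artanh
      · exact div_nonneg (mul_nonneg hl0 hdnum) (by linarith)
      · rw [show lam * ((θ₁ - θ₂) / (1 - θ₁ * θ₂)) = lam * (θ₁ - θ₂) / (1 - θ₁ * θ₂) from
          (mul_div_assoc _ _ _).symm]
        apply div_le_div_of_nonneg_left (mul_nonneg hl0 hdnum) (by linarith)
        nlinarith [hpp0]
      · exact lt_of_le_of_lt (mul_le_of_le_one_left hd0 hl1) hdlt
    have m2 : artanh (lam * ((θ₁ - θ₂) / (1 - θ₁ * θ₂)))
        ≤ lam * artanh ((θ₁ - θ₂) / (1 - θ₁ * θ₂)) :=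
      artanh_scale hd0 hdlt hl0 hl1
    have m3 : artanh ((θ₁ - θ₂) / (1 - θ₁ * θ₂)) = A - B := by
      have := artanh_add (a := θ₁) (b := -θ₂) (by linarith) h11 (by linarith) (by linarith)
      rw [artanh_neg, show (θ₁ + -θ₂) / (1 + θ₁ * -θ₂) = (θ₁ - θ₂) / (1 - θ₁ * θ₂) from by
        ring_nf] at this
      linarith [this]
    calc artanh (lam * (θ₁ - θ₂) / (1 - lam * θ₁ * θ₂))
        ≤ artanh (lam * ((θ₁ - θ₂) / (1 - θ₁ * θ₂))) := m1
      _ ≤ lam * artanh ((θ₁ - θ₂) / (1 - θ₁ * θ₂)) := m2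
      _ = lam * (A - B) := by rw [m3]
  -- combine
  have hs0 : (0:ℝ) ≤ (1 / 2) * (θ₁ + θ₂) := by linarith
  have hd0' : (0:ℝ) ≤ (1 / 2) * (θ₁ - θ₂) := by linarith
  have c1 : (1 / 2) * (θ₁ + θ₂) * artanh (lam * (θ₁ + θ₂) / (1 + lam * θ₁ * θ₂))
      ≤ (1 / 2) * (θ₁ + θ₂) * (lam * A + lam * B) :=
    mul_le_mul_of_nonneg_left plus hs0
  have c2 : (1 / 2) * (θ₁ - θ₂) * artanh (lam * (θ₁ - θ₂) / (1 - lam * θ₁ * θ₂))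
      ≤ (1 / 2) * (θ₁ - θ₂) * (lam * (A - B)) :=
    mul_le_mul_of_nonneg_left minus hd0'
  have inner : (1 / 2) * (θ₁ + θ₂) * artanh (lam * (θ₁ + θ₂) / (1 + lam * θ₁ * θ₂))
      + (1 / 2) * (θ₁ - θ₂) * artanh (lam * (θ₁ - θ₂) / (1 - lam * θ₁ * θ₂))
      ≤ lam * (θ₁ * A + θ₂ * B) := by nlinarith [c1, c2]
  calc lam * ((1 / 2) * (θ₁ + θ₂) * artanh (lam * (θ₁ + θ₂) / (1 + lam * θ₁ * θ₂))
        + (1 / 2) * (θ₁ - θ₂) * artanh (lam * (θ₁ - θ₂) / (1 - lam * θ₁ * θ₂)))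
      ≤ lam * (lam * (θ₁ * A + θ₂ * B)) := mul_le_mul_of_nonneg_left inner hl0
    _ = lam ^ 2 * (θ₁ * A + θ₂ * B) := by ring

/-- Lemma B.1 (SKL contraction for `r = 3`), in terms of the θ-parameters: for `λ ∈ [0,1]`
and `θ₁, θ₂ ∈ [0,1)`,
`λ·(½(θ₁+θ₂)·artanh(λ(θ₁+θ₂)/(1+λθ₁θ₂)) + ½(θ₁−θ₂)·artanh(λ(θ₁−θ₂)/(1−λθ₁θ₂)))
  ≤ λ²·(θ₁·artanh θ₁ + θ₂·artanh θ₂)`. -/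
theorem stmt2 (lam θ₁ θ₂ : ℝ) (hlam : lam ∈ Set.Icc (0 : ℝ) 1)
    (hθ₁ : θ₁ ∈ Set.Ico (0 : ℝ) 1) (hθ₂ : θ₂ ∈ Set.Ico (0 : ℝ) 1) :
    lam * ((1 / 2) * (θ₁ + θ₂) * artanh (lam * (θ₁ + θ₂) / (1 + lam * θ₁ * θ₂))
        + (1 / 2) * (θ₁ - θ₂) * artanh (lam * (θ₁ - θ₂) / (1 - lam * θ₁ * θ₂)))
      ≤ lam ^ 2 * (θ₁ * artanh θ₁ + θ₂ * artanh θ₂) := by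
  obtain ⟨hl0, hl1⟩ := hlam
  obtain ⟨h10, h11⟩ := hθ₁
  obtain ⟨h20, h21⟩ := hθ₂
  rcases le_total θ₂ θ₁ with h | h
  · exact key_lemma lam θ₁ θ₂ hl0 hl1 h10 h11 h20 h21 h
  · have k := key_lemma lam θ₂ θ₁ hl0 hl1 h20 h21 h10 h11 h
    have e1 : lam * (θ₂ + θ₁) / (1 + lam * θ₂ * θ₁)
        = lam * (θ₁ + θ₂) / (1 + lam * θ₁ * θ₂) := by ring_nf
    have e2 : lam * (θ₂ - θ₁) / (1 - lam * θ₂ * θ₁)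
        = -(lam * (θ₁ - θ₂) / (1 - lam * θ₁ * θ₂)) := by ring_nf
    rw [e1, e2, artanh_neg] at k
    linear_combination k
end

section
/- Let λ ∈ (0,1) and θ₁, θ₂ ∈ [0,1) with max{θ₁, θ₂} > 0. Then the inequality is strict: λ·( (1/2)(θ₁+θ₂)·artanh( λ(θ₁+θ₂)/(1+λθ₁θ₂) ) + (1/2)(θ₁−θ₂)·artanh( λ(θ₁−θ₂)/(1−λθ₁θ₂) ) ) < λ²·( θ₁·artanh(θ₁) + θ₂·artanh(θ₂) ). -/
lemma artanh_zero : artanh 0 = 0 := by norm_num [artanh]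

lemma artanh_of_div {a b : ℝ} (hb : 0 < b) (h1 : -b < a) (h2 : a < b) :
    artanh (a / b) = 1 / 2 * (Real.log (b + a) - Real.log (b - a)) := by
  have hba : 0 < b + a := by linarith
  have hbs : 0 < b - a := by linarith
  unfold artanh
  have hY : 0 < 1 - a / b := by
    have := (div_lt_one hb).mpr h2; linarith
  have h : (1 + a / b) / (1 - a / b) = (b + a) / (b - a) := by
    rw [div_eq_div_iff hY.ne' hbs.ne']
    field_simp
  rw [h, Real.log_div hba.ne' hbs.ne']

lemma artanh_hasDerivAt {x : ℝ} (h1 : -1 < x) (h2 : x < 1) :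
    HasDerivAt artanh (1 / (1 - x ^ 2)) x := by
  have hp : (0:ℝ) < 1 + x := by linarith
  have hm : (0:ℝ) < 1 - x := by linarith
  have hd : HasDerivAt (fun y : ℝ => (1 + y) / (1 - y))
      ((1 * (1 - x) - (1 + x) * (-1)) / (1 - x) ^ 2) x :=
    ((hasDerivAt_id x).const_add 1).div ((hasDerivAt_id x).const_sub 1) hm.ne'
  have hl := (hd.log (by positivity)).const_mul (1/2 : ℝ)
  have : HasDerivAt artanh
      (1 / 2 * ((1 * (1 - x) - (1 + x) * (-1)) / (1 - x) ^ 2 / ((1 + x) / (1 - x)))) x := hl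
  have hq : (1 - x ^ 2) ≠ 0 := by nlinarith
  convert this using 1
  field_simp [hq]
  ring

lemma artanh_pos {x : ℝ} (h0 : 0 < x) (h1 : x < 1) : 0 < artanh x := by
  unfold artanh
  have : (1:ℝ) < (1 + x) / (1 - x) := by
    rw [lt_div_iff₀ (by linarith)]; linarith
  have := Real.log_pos this
  linarith

lemma artanh_mul_lt {c x : ℝ} (hc0 : 0 < c) (hc1 : c < 1) (hx0 : 0 < x) (hx1 : x < 1) :
    artanh (c * x) < c * artanh x := by
  set g : ℝ → ℝ := fun y => c * artanh y - artanh (c * y) with hg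
  have hder : ∀ y ∈ Set.Icc (0:ℝ) x,
      HasDerivAt g (c * (1 / (1 - y ^ 2)) - 1 / (1 - (c * y) ^ 2) * c) y := by
    intro y hy
    have hy0 := hy.1
    have hy1 : y < 1 := lt_of_le_of_lt hy.2 hx1
    have hcy0 : 0 ≤ c * y := mul_nonneg hc0.le hy0
    have hcy1 : c * y < 1 := by nlinarith [mul_lt_mul_of_pos_right hc1 hx0]
    have h1 : HasDerivAt (fun y => artanh (c * y)) (1 / (1 - (c * y) ^ 2) * c) y := by
      have := (artanh_hasDerivAt (x := c * y) (by linarith) hcy1).comp y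
        ((hasDerivAt_id y).const_mul c)
      simpa [Function.comp_def] using this
    exact ((artanh_hasDerivAt (by linarith) hy1).const_mul c).sub h1
  have hcont : ContinuousOn g (Set.Icc 0 x) := fun y hy =>
    (hder y hy).continuousAt.continuousWithinAt
  have hmono : StrictMonoOn g (Set.Icc 0 x) := by
    apply strictMonoOn_of_deriv_pos (convex_Icc 0 x) hcont
    intro y hy
    rw [interior_Icc] at hy
    have hy0 := hy.1
    have hy1 : y < 1 := lt_of_lt_of_le hy.2 hx1.le
    rw [(hder y ⟨hy.1.le, hy.2.le⟩).deriv]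
    have hcy0 : 0 < c * y := mul_pos hc0 hy0
    have hcy1 : c * y < 1 := by nlinarith
    have h1 : (0:ℝ) < 1 - y ^ 2 := by nlinarith
    have h2 : (0:ℝ) < 1 - (c * y) ^ 2 := by nlinarith
    have h3 : 1 - y ^ 2 < 1 - (c * y) ^ 2 := by
      have hlt : c * y < y := by nlinarith
      have := mul_pos (show 0 < y - c * y by linarith) (show 0 < y + c * y by linarith)
      nlinarith
    have := one_div_lt_one_div_of_lt h1 h3
    nlinarith
  have := hmono (Set.left_mem_Icc.mpr hx0.le) (Set.right_mem_Icc.mpr hx0.le) hx0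
  have hg0 : g 0 = 0 := by simp [hg, artanh_zero]
  rw [hg0] at this
  simp only [hg] at this
  linarith

/-- key per-variable bound, strict version -/
lemma keybound_strict {lam u v : ℝ} (hl0 : 0 < lam) (hl1 : lam < 1)
    (hu0 : 0 < u) (hu1 : u < 1) (hv0 : 0 ≤ v) (hv1 : v < 1) :
    artanh (lam * (1 + v) / (1 + lam * v) * u) + artanh (lam * (1 - v) / (1 - lam * v) * u)
      < 2 * lam * artanh u := by
  have hb1 : (0:ℝ) < 1 + lam * v := by nlinarith
  have hb2 : (0:ℝ) < 1 - lam * v := by nlinarith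
  have hc10 : 0 < lam * (1 + v) / (1 + lam * v) := by positivity
  have hc11 : lam * (1 + v) / (1 + lam * v) < 1 := by
    rw [div_lt_one hb1]; nlinarith
  have hc20 : 0 < lam * (1 - v) / (1 - lam * v) := by
    apply div_pos (by nlinarith) hb2
  have hc21 : lam * (1 - v) / (1 - lam * v) < 1 := by
    rw [div_lt_one hb2]; nlinarith
  have A1 := artanh_mul_lt hc10 hc11 hu0 hu1
  have A2 := artanh_mul_lt hc20 hc21 hu0 hu1
  have hsum : lam * (1 + v) / (1 + lam * v) + lam * (1 - v) / (1 - lam * v) ≤ 2 * lam := by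
    rw [div_add_div _ _ hb1.ne' hb2.ne', div_le_iff₀ (by positivity)]
    nlinarith [mul_nonneg (mul_nonneg hl0.le hl0.le) (mul_nonneg (mul_nonneg hv0 hv0) (by linarith : (0:ℝ) ≤ 1 - lam))]
  have hA := artanh_pos hu0 hu1
  nlinarith

lemma keybound_le {lam u v : ℝ} (hl0 : 0 < lam) (hl1 : lam < 1)
    (hu0 : 0 ≤ u) (hu1 : u < 1) (hv0 : 0 ≤ v) (hv1 : v < 1) :
    artanh (lam * (1 + v) / (1 + lam * v) * u) + artanh (lam * (1 - v) / (1 - lam * v) * u)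
      ≤ 2 * lam * artanh u := by
  rcases hu0.eq_or_lt with h | h
  · simp [← h, artanh_zero]
  · exact (keybound_strict hl0 hl1 h hu1 hv0 hv1).le

set_option maxHeartbeats 1000000 in
/-- Strictness claim of Lemma B.1 (SKL contraction for `r = 3`): for `λ ∈ (0,1)` and
`θ₁, θ₂ ∈ [0,1)` with `max{θ₁,θ₂} > 0`, the contraction inequality is strict. -/
theorem stmt3 (lam θ₁ θ₂ : ℝ) (hlam : lam ∈ Set.Ioo (0 : ℝ) 1)
    (hθ₁ : θ₁ ∈ Set.Ico (0 : ℝ) 1) (hθ₂ : θ₂ ∈ Set.Ico (0 : ℝ) 1)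
    (hmax : 0 < max θ₁ θ₂) :
    lam * ((1 / 2) * (θ₁ + θ₂) * artanh (lam * (θ₁ + θ₂) / (1 + lam * θ₁ * θ₂))
        + (1 / 2) * (θ₁ - θ₂) * artanh (lam * (θ₁ - θ₂) / (1 - lam * θ₁ * θ₂)))
      < lam ^ 2 * (θ₁ * artanh θ₁ + θ₂ * artanh θ₂) := by
  obtain ⟨hl0, hl1⟩ := hlam
  obtain ⟨hu0, hu1⟩ := hθ₁
  obtain ⟨hv0, hv1⟩ := hθ₂
  set u := θ₁
  set v := θ₂
  -- positivity of all linear factors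
  have hlu : lam * u < 1 := lt_of_le_of_lt (mul_le_of_le_one_right hl0.le hu1.le) hl1
  have hlv : lam * v < 1 := lt_of_le_of_lt (mul_le_of_le_one_right hl0.le hv1.le) hl1
  have hlu0 : 0 ≤ lam * u := mul_nonneg hl0.le hu0
  have hlv0 : 0 ≤ lam * v := mul_nonneg hl0.le hv0
  have hluv0 : 0 ≤ lam * u * v := mul_nonneg hlu0 hv0
  have hN1 : (0:ℝ) < 1 + lam * u + lam * v + lam * u * v := by linarith
  have hD1 : (0:ℝ) < 1 - lam * u - lam * v + lam * u * v := by
    nlinarith [mul_pos (show (0:ℝ) < 1 - lam * u by linarith) (show (0:ℝ) < 1 - lam * v by linarith),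
      mul_nonneg hluv0 (show (0:ℝ) ≤ 1 - lam by linarith)]
  have hN2 : (0:ℝ) < 1 + lam * u - lam * v - lam * u * v := by
    nlinarith [mul_nonneg hlu0 (show (0:ℝ) ≤ 1 - v by linarith)]
  have hD2 : (0:ℝ) < 1 - lam * u + lam * v - lam * u * v := by
    nlinarith [mul_nonneg hlv0 (show (0:ℝ) ≤ 1 - u by linarith)]
  set l1 := Real.log (1 + lam * u + lam * v + lam * u * v) with hl1def
  set l2 := Real.log (1 - lam * u - lam * v + lam * u * v) with hl2def
  set l3 := Real.log (1 + lam * u - lam * v - lam * u * v) with hl3def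
  set l4 := Real.log (1 - lam * u + lam * v - lam * u * v) with hl4def
  -- rewrite the two artanh terms in the goal
  have E1 : artanh (lam * (u + v) / (1 + lam * u * v)) = 1 / 2 * (l1 - l2) := by
    rw [artanh_of_div (by nlinarith) (by nlinarith) (by nlinarith)]
    rw [hl1def, hl2def,
      show 1 + lam * u * v + lam * (u + v) = 1 + lam * u + lam * v + lam * u * v by ring,
      show 1 + lam * u * v - lam * (u + v) = 1 - lam * u - lam * v + lam * u * v by ring]
  have E2 : artanh (lam * (u - v) / (1 - lam * u * v)) = 1 / 2 * (l3 - l4) := by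
    rw [artanh_of_div (by nlinarith) (by nlinarith) (by nlinarith)]
    rw [hl3def, hl4def,
      show 1 - lam * u * v + lam * (u - v) = 1 + lam * u - lam * v - lam * u * v by ring,
      show 1 - lam * u * v - lam * (u - v) = 1 - lam * u + lam * v - lam * u * v by ring]
  have E3 : artanh (lam * (1 + v) / (1 + lam * v) * u) = 1 / 2 * (l1 - l4) := by
    rw [show lam * (1 + v) / (1 + lam * v) * u = lam * (1 + v) * u / (1 + lam * v) by ring,
      artanh_of_div (by nlinarith) (by nlinarith) (by nlinarith)]
    rw [hl1def, hl4def,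
      show 1 + lam * v + lam * (1 + v) * u = 1 + lam * u + lam * v + lam * u * v by ring,
      show 1 + lam * v - lam * (1 + v) * u = 1 - lam * u + lam * v - lam * u * v by ring]
  have E4 : artanh (lam * (1 - v) / (1 - lam * v) * u) = 1 / 2 * (l3 - l2) := by
    rw [show lam * (1 - v) / (1 - lam * v) * u = lam * (1 - v) * u / (1 - lam * v) by ring,
      artanh_of_div (by nlinarith) (by nlinarith) (by nlinarith)]
    rw [hl3def, hl2def,
      show 1 - lam * v + lam * (1 - v) * u = 1 + lam * u - lam * v - lam * u * v by ring,
      show 1 - lam * v - lam * (1 - v) * u = 1 - lam * u - lam * v + lam * u * v by ring]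
  have E5 : artanh (lam * (1 + u) / (1 + lam * u) * v) = 1 / 2 * (l1 - l3) := by
    rw [show lam * (1 + u) / (1 + lam * u) * v = lam * (1 + u) * v / (1 + lam * u) by ring,
      artanh_of_div (by nlinarith) (by nlinarith) (by nlinarith)]
    rw [hl1def, hl3def,
      show 1 + lam * u + lam * (1 + u) * v = 1 + lam * u + lam * v + lam * u * v by ring,
      show 1 + lam * u - lam * (1 + u) * v = 1 + lam * u - lam * v - lam * u * v by ring]
  have E6 : artanh (lam * (1 - u) / (1 - lam * u) * v) = 1 / 2 * (l4 - l2) := by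
    rw [show lam * (1 - u) / (1 - lam * u) * v = lam * (1 - u) * v / (1 - lam * u) by ring,
      artanh_of_div (by nlinarith) (by nlinarith) (by nlinarith)]
    rw [hl4def, hl2def,
      show 1 - lam * u + lam * (1 - u) * v = 1 - lam * u + lam * v - lam * u * v by ring,
      show 1 - lam * u - lam * (1 - u) * v = 1 - lam * u - lam * v + lam * u * v by ring]
  have Hu_le : 1 / 2 * (l1 - l4) + 1 / 2 * (l3 - l2) ≤ 2 * lam * artanh u := by
    rw [← E3, ← E4]; exact keybound_le hl0 hl1 hu0 hu1 hv0 hv1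
  have Hv_le : 1 / 2 * (l1 - l3) + 1 / 2 * (l4 - l2) ≤ 2 * lam * artanh v := by
    rw [← E5, ← E6]; exact keybound_le hl0 hl1 hv0 hv1 hu0 hu1
  rw [E1, E2]
  have hau : 0 ≤ artanh u := by
    rcases hu0.eq_or_lt with h | h
    · simp [← h, artanh_zero]
    · exact (artanh_pos h hu1).le
  have hav : 0 ≤ artanh v := by
    rcases hv0.eq_or_lt with h | h
    · simp [← h, artanh_zero]
    · exact (artanh_pos h hv1).le
  rcases lt_max_iff.mp hmax with h | h
  · have Hu : 1 / 2 * (l1 - l4) + 1 / 2 * (l3 - l2) < 2 * lam * artanh u := by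
      rw [← E3, ← E4]; exact keybound_strict hl0 hl1 h hu1 hv0 hv1
    nlinarith [mul_lt_mul_of_pos_left Hu h, mul_le_mul_of_nonneg_left Hv_le hv0,
      mul_pos hl0 hl0]
  · have Hv : 1 / 2 * (l1 - l3) + 1 / 2 * (l4 - l2) < 2 * lam * artanh v := by
      rw [← E5, ← E6]; exact keybound_strict hl0 hl1 h hv1 hu0 hu1
    nlinarith [mul_lt_mul_of_pos_left Hv h, mul_le_mul_of_nonneg_left Hu_le hu0,
      mul_pos hl0 hl0]
end

section
/- Let λ ∈ (0,1) and θ₁, θ₂, θ₃ ∈ [0,1) with max{θ₁, θ₂, θ₃} > 0. For signs s₂, s₃ ∈ {−1, +1}, write N(s₂,s₃) = θ₁ + s₂θ₂ + s₃θ₃ + s₂s₃·θ₁θ₂θ₃ and D(s₂,s₃) = 1 + λ·( s₂θ₁θ₂ + s₂s₃θ₂θ₃ + s₃θ₃θ₁ ). Then the inequality is strict: (1/4)·Σ_{s₂,s₃ ∈ {−1,+1}} N(s₂,s₃)·artanh( λ·N(s₂,s₃) / D(s₂,s₃) ) < λ·( θ₁·artanh(θ₁) + θ₂·artanh(θ₂)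 + θ₃·artanh(θ₃) ). -/
/-- Numerator `N(s₂,s₃) = θ₁ + s₂θ₂ + s₃θ₃ + s₂s₃·θ₁θ₂θ₃`. -/
def N (θ₁ θ₂ θ₃ s₂ s₃ : ℝ) : ℝ := θ₁ + s₂ * θ₂ + s₃ * θ₃ + s₂ * s₃ * (θ₁ * θ₂ * θ₃)

/-- Denominator `D(s₂,s₃) = 1 + λ·(s₂θ₁θ₂ + s₂s₃θ₂θ₃ + s₃θ₃θ₁)`. -/
def D (lam θ₁ θ₂ θ₃ s₂ s₃ : ℝ) : ℝ :=
  1 + lam * (s₂ * (θ₁ * θ₂) + s₂ * s₃ * (θ₂ * θ₃) + s₃ * (θ₃ * θ₁))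

/- ### Auxiliary lemmas about `artanh` -/

lemma artanh_nonneg {x : ℝ} (h0 : 0 ≤ x) (h1 : x < 1) : 0 ≤ artanh x := by
  unfold artanh
  have h : (1 : ℝ) ≤ (1 + x) / (1 - x) := by
    rw [le_div_iff₀ (by linarith)]; linarith
  have := Real.log_nonneg h
  linarith

lemma artanh_lt_artanh {a b : ℝ} (ha : -1 < a) (hab : a < b) (hb : b < 1) :
    artanh a < artanh b := by
  unfold artanh
  have h1 : (0 : ℝ) < 1 - a := by linarith
  have h2 : (0 : ℝ) < 1 - b := by linarith
  have hpos : 0 < (1 + a) / (1 - a) := div_pos (by linarith) h1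
  have hlt : (1 + a) / (1 - a) < (1 + b) / (1 - b) := by
    rw [div_lt_div_iff₀ h1 h2]; nlinarith
  have := Real.log_lt_log hpos hlt
  linarith

lemma artanh_le_artanh_s5 {a b : ℝ} (ha : -1 < a) (hab : a ≤ b) (hb : b < 1) :
    artanh a ≤ artanh b := by
  rcases eq_or_lt_of_le hab with rfl | h
  · exact le_rfl
  · exact (artanh_lt_artanh ha h hb).le

lemma artanh_tanh (y : ℝ) : artanh (Real.sinh y / Real.cosh y) = y := by
  unfold artanh
  have hc : 0 < Real.cosh y := Real.cosh_pos y
  have h1 : 1 + Real.sinh y / Real.cosh y = Real.exp y / Real.cosh y := by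
    field_simp
    exact Real.cosh_add_sinh y
  have h2 : 1 - Real.sinh y / Real.cosh y = Real.exp (-y) / Real.cosh y := by
    field_simp
    exact Real.cosh_sub_sinh y
  rw [h1, h2]
  have h3 : Real.exp y / Real.cosh y / (Real.exp (-y) / Real.cosh y)
      = Real.exp y / Real.exp (-y) := by
    field_simp
  have h4 : Real.exp y / Real.exp (-y) = Real.exp (2 * y) := by
    rw [← Real.exp_sub]; ring_nf
  rw [h3, h4, Real.log_exp]
  ring

lemma sinh_artanh {x : ℝ} (h1 : -1 < x) (h2 : x < 1) :
    Real.sinh (artanh x) = x * Real.cosh (artanh x) := by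
  have ha : (0 : ℝ) < 1 + x := by linarith
  have hb : (0 : ℝ) < 1 - x := by linarith
  set t := artanh x with ht
  have hu : Real.exp t ^ 2 = (1 + x) / (1 - x) := by
    have e1 : Real.exp t ^ 2 = Real.exp (2 * t) := by
      rw [sq, ← Real.exp_add]; ring_nf
    have e2 : 2 * t = Real.log ((1 + x) / (1 - x)) := by
      rw [ht]; unfold artanh; ring
    rw [e1, e2, Real.exp_log (div_pos ha hb)]
  have hue : 0 < Real.exp t := Real.exp_pos t
  have hkey : Real.exp t ^ 2 * (1 - x) = 1 + x := by
    rw [hu]; field_simp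
  rw [Real.sinh_eq, Real.cosh_eq, Real.exp_neg]
  field_simp
  nlinarith [hkey]

lemma hasDerivAt_artanh {y : ℝ} (h1 : -1 < y) (h2 : y < 1) :
    HasDerivAt artanh (1 / (1 - y ^ 2)) y := by
  have ha : (0 : ℝ) < 1 + y := by linarith
  have hb : (0 : ℝ) < 1 - y := by linarith
  have hq : HasDerivAt (fun x : ℝ => (1 + x) / (1 - x)) (2 / (1 - y) ^ 2) y := by
    have hnum : HasDerivAt (fun x : ℝ => 1 + x) 1 y := (hasDerivAt_id y).const_add 1
    have hden : HasDerivAt (fun x : ℝ => 1 - x) (-1) y := (hasDerivAt_id y).const_sub 1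
    have := hnum.div hden hb.ne'
    refine this.congr_deriv ?_
    ring
  have hne : (1 + y) / (1 - y) ≠ 0 := (div_pos ha hb).ne'
  have hlog := hq.log hne
  have hfin := hlog.const_mul (1 / 2 : ℝ)
  have heq : artanh = fun x : ℝ => (1 / 2) * Real.log ((1 + x) / (1 - x)) := rfl
  rw [heq]
  refine hfin.congr_deriv ?_
  have h3y : (1 : ℝ) - y ^ 2 ≠ 0 := by nlinarith
  field_simp
  ring

lemma artanh_cubic {x : ℝ} (h0 : 0 ≤ x) (h1 : x < 1) : x + x ^ 3 / 3 ≤ artanh x := by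
  rcases eq_or_lt_of_le h0 with rfl | hx
  · simp [artanh_zero]
  · set f : ℝ → ℝ := fun y => artanh y - (y + y ^ 3 / 3) with hf
    have hd : ∀ y ∈ Set.Icc (0 : ℝ) x, HasDerivAt f (1 / (1 - y ^ 2) - (1 + y ^ 2)) y := by
      intro y hy
      obtain ⟨hy0, hyx⟩ := hy
      have hder := hasDerivAt_artanh (by linarith : (-1 : ℝ) < y) (by linarith : y < 1)
      have hpoly : HasDerivAt (fun y : ℝ => y + y ^ 3 / 3) (1 + y ^ 2) y := by
        have h1' : HasDerivAt (fun y : ℝ => y) 1 y := hasDerivAt_id y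
        have h2' : HasDerivAt (fun y : ℝ => y ^ 3) (3 * y ^ 2) y := by
          simpa using hasDerivAt_pow 3 y
        have := h1'.add (h2'.div_const 3)
        refine this.congr_deriv ?_
        ring
      exact hder.sub hpoly
    have hmono : MonotoneOn f (Set.Icc (0 : ℝ) x) := by
      apply monotoneOn_of_deriv_nonneg (convex_Icc 0 x)
      · intro y hy
        exact (hd y hy).continuousAt.continuousWithinAt
      · intro y hy
        rw [interior_Icc] at hy
        exact (hd y ⟨hy.1.le, hy.2.le⟩).differentiableAt.differentiableWithinAt
      · intro y hy
        rw [interior_Icc] at hy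
        rw [(hd y ⟨hy.1.le, hy.2.le⟩).deriv]
        have hy1 : y < 1 := lt_trans hy.2 h1
        have hy0 : 0 ≤ y := hy.1.le
        have hpos : 0 < 1 - y ^ 2 := by nlinarith
        rw [sub_nonneg, le_div_iff₀ hpos]
        nlinarith [pow_nonneg hy0 4]
    have hle := hmono (Set.left_mem_Icc.mpr h0) (Set.right_mem_Icc.mpr h0) h0
    simp only [hf, artanh_zero] at hle
    norm_num at hle
    linarith

/- ### Auxiliary lemmas about `sinh` -/

lemma sinh_le_mul_cosh {t : ℝ} (h : 0 ≤ t) : Real.sinh t ≤ t * Real.cosh t := by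
  set f : ℝ → ℝ := fun y => y * Real.cosh y - Real.sinh y with hf
  have hd : ∀ y : ℝ, HasDerivAt f (y * Real.sinh y) y := by
    intro y
    have h1 : HasDerivAt (fun y : ℝ => y * Real.cosh y)
        (1 * Real.cosh y + y * Real.sinh y) y :=
      (hasDerivAt_id y).mul (Real.hasDerivAt_cosh y)
    have := h1.sub (Real.hasDerivAt_sinh y)
    refine this.congr_deriv ?_
    ring
  have hmono : MonotoneOn f (Set.Icc (0 : ℝ) t) := by
    apply monotoneOn_of_deriv_nonneg (convex_Icc 0 t)
    · intro y _; exact (hd y).continuousAt.continuousWithinAt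
    · intro y _; exact (hd y).differentiableAt.differentiableWithinAt
    · intro y hy
      rw [interior_Icc] at hy
      rw [(hd y).deriv]
      have : 0 ≤ Real.sinh y := Real.sinh_nonneg_iff.mpr hy.1.le
      exact mul_nonneg hy.1.le this
  have hle := hmono (Set.left_mem_Icc.mpr h) (Set.right_mem_Icc.mpr h) h
  simp only [hf] at hle
  simp at hle
  linarith

lemma conv_sinh {a b : ℝ} (ha : 0 ≤ a) (hab : a ≤ b) :
    b * Real.sinh a ≤ a * Real.sinh b := by
  set f : ℝ → ℝ := fun y => a * Real.sinh y - y * Real.sinh a with hf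
  have hd : ∀ y : ℝ, HasDerivAt f (a * Real.cosh y - 1 * Real.sinh a) y := by
    intro y
    have h1 : HasDerivAt (fun y : ℝ => a * Real.sinh y) (a * Real.cosh y) y :=
      (Real.hasDerivAt_sinh y).const_mul a
    have h2 : HasDerivAt (fun y : ℝ => y * Real.sinh a) (1 * Real.sinh a) y :=
      (hasDerivAt_id y).mul_const (Real.sinh a)
    exact h1.sub h2
  have hmono : MonotoneOn f (Set.Icc a b) := by
    apply monotoneOn_of_deriv_nonneg (convex_Icc a b)
    · intro y _; exact (hd y).continuousAt.continuousWithinAt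
    · intro y _; exact (hd y).differentiableAt.differentiableWithinAt
    · intro y hy
      rw [interior_Icc] at hy
      rw [(hd y).deriv]
      have h1 : Real.sinh a ≤ a * Real.cosh a := sinh_le_mul_cosh ha
      have h2 : Real.cosh a ≤ Real.cosh y := by
        rw [Real.cosh_le_cosh, abs_of_nonneg ha,
          abs_of_nonneg (by linarith [hy.1] : (0 : ℝ) ≤ y)]
        exact hy.1.le
      nlinarith
  have hle := hmono (Set.left_mem_Icc.mpr hab) (Set.right_mem_Icc.mpr hab) hab
  simp only [hf] at hle
  linarith

/-- Core analytic inequality. -/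
lemma core {lam x C : ℝ} (h0 : 0 ≤ lam) (h1 : lam ≤ 1) (hx : 0 ≤ x) (hC : 0 < C)
    (hsx : Real.sinh x ≤ x * C) :
    lam * Real.sinh (x - lam * x) ≤ (1 - lam) * C * Real.sinh (lam * x) := by
  have h2 : Real.sinh (x - lam * x) ≤ (1 - lam) * Real.sinh x := by
    rcases eq_or_lt_of_le hx with rfl | hx'
    · simp
    · have hle : x - lam * x ≤ x := by nlinarith
      have h0' : 0 ≤ x - lam * x := by nlinarith
      have := conv_sinh h0' hle
      nlinarith
  have h3 : lam * x ≤ Real.sinh (lam * x) :=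
    Real.self_le_sinh_iff.mpr (mul_nonneg h0 hx)
  have h4 : 0 ≤ Real.sinh x := Real.sinh_nonneg_iff.mpr hx
  calc lam * Real.sinh (x - lam * x)
      ≤ lam * ((1 - lam) * Real.sinh x) := mul_le_mul_of_nonneg_left h2 h0
    _ ≤ lam * ((1 - lam) * (x * C)) := mul_le_mul_of_nonneg_left
        (mul_le_mul_of_nonneg_left hsx (by linarith)) h0
    _ = (1 - lam) * C * (lam * x) := by ring
    _ ≤ (1 - lam) * C * Real.sinh (lam * x) :=
        mul_le_mul_of_nonneg_left h3 (mul_nonneg (by linarith) hC.le)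

/-- Strict version of the core inequality. -/
lemma core_strict {lam x C : ℝ} (h0 : 0 < lam) (h1 : lam < 1) (hx : 0 < x) (hC : 0 < C)
    (hsx : Real.sinh x ≤ x * C) :
    lam * Real.sinh (x - lam * x) < (1 - lam) * C * Real.sinh (lam * x) := by
  have h2 : Real.sinh (x - lam * x) ≤ (1 - lam) * Real.sinh x := by
    have hle : x - lam * x ≤ x := by nlinarith
    have h0' : 0 ≤ x - lam * x := by nlinarith
    have := conv_sinh h0' hle
    nlinarith
  have h3 : lam * x < Real.sinh (lam * x) :=
    Real.self_lt_sinh_iff.mpr (mul_pos h0 hx)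
  have h4 : 0 ≤ Real.sinh x := Real.sinh_nonneg_iff.mpr hx.le
  calc lam * Real.sinh (x - lam * x)
      ≤ lam * ((1 - lam) * Real.sinh x) := mul_le_mul_of_nonneg_left h2 h0.le
    _ ≤ lam * ((1 - lam) * (x * C)) := mul_le_mul_of_nonneg_left
        (mul_le_mul_of_nonneg_left hsx (by linarith)) h0.le
    _ = (1 - lam) * C * (lam * x) := by ring
    _ < (1 - lam) * C * Real.sinh (lam * x) :=
        mul_lt_mul_of_pos_left h3 (mul_pos (by linarith) hC)

/-- The `(+,+)` combination bound: `θ₁+θ₂+θ₃+θ₁θ₂θ₃ ≤ t₁+t₂+t₃`. -/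
lemma theta_sum_le {θ₁ θ₂ θ₃ : ℝ} (h1 : 0 ≤ θ₁) (h1' : θ₁ < 1) (h2 : 0 ≤ θ₂)
    (h2' : θ₂ < 1) (h3 : 0 ≤ θ₃) (h3' : θ₃ < 1) :
    θ₁ + θ₂ + θ₃ + θ₁ * θ₂ * θ₃ ≤ artanh θ₁ + artanh θ₂ + artanh θ₃ := by
  have hc1 : θ₁ + θ₁ ^ 3 / 3 ≤ artanh θ₁ := artanh_cubic h1 h1'
  have hc2 : θ₂ + θ₂ ^ 3 / 3 ≤ artanh θ₂ := artanh_cubic h2 h2'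
  have hc3 : θ₃ + θ₃ ^ 3 / 3 ≤ artanh θ₃ := artanh_cubic h3 h3'
  have hq : (0 : ℝ) ≤ θ₁ ^ 2 + θ₂ ^ 2 + θ₃ ^ 2 - θ₁ * θ₂ - θ₂ * θ₃ - θ₁ * θ₃ := by
    nlinarith [sq_nonneg (θ₁ - θ₂), sq_nonneg (θ₂ - θ₃), sq_nonneg (θ₁ - θ₃)]
  have amgm : 3 * (θ₁ * θ₂ * θ₃) ≤ θ₁ ^ 3 + θ₂ ^ 3 + θ₃ ^ 3 := by
    nlinarith [mul_nonneg (add_nonneg (add_nonneg h1 h2) h3) hq]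
  linarith

set_option maxHeartbeats 4000000 in
/-- Per-sign-pattern bound, with strictness for the `(+1, +1)` pattern. -/
lemma pat (lam θ₁ θ₂ θ₃ σ τ : ℝ) (hσ : σ = 1 ∨ σ = -1) (hτ : τ = 1 ∨ τ = -1)
    (hl0 : 0 < lam) (hl1 : lam < 1)
    (h1 : 0 ≤ θ₁) (h1' : θ₁ < 1) (h2 : 0 ≤ θ₂) (h2' : θ₂ < 1)
    (h3 : 0 ≤ θ₃) (h3' : θ₃ < 1) :
    N θ₁ θ₂ θ₃ σ τ * artanh (lam * N θ₁ θ₂ θ₃ σ τ / D lam θ₁ θ₂ θ₃ σ τ)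
      ≤ lam * (N θ₁ θ₂ θ₃ σ τ * (artanh θ₁ + σ * artanh θ₂ + τ * artanh θ₃))
    ∧ (σ = 1 → τ = 1 → 0 < θ₁ + θ₂ + θ₃ →
      N θ₁ θ₂ θ₃ σ τ * artanh (lam * N θ₁ θ₂ θ₃ σ τ / D lam θ₁ θ₂ θ₃ σ τ)
        < lam * (N θ₁ θ₂ θ₃ σ τ * (artanh θ₁ + σ * artanh θ₂ + τ * artanh θ₃))) := by
  set t₁ := artanh θ₁ with ht₁
  set t₂ := artanh θ₂ with ht₂
  set t₃ := artanh θ₃ with ht₃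
  have hs1 : Real.sinh t₁ = θ₁ * Real.cosh t₁ := sinh_artanh (by linarith) h1'
  have hs2 : Real.sinh t₂ = θ₂ * Real.cosh t₂ := sinh_artanh (by linarith) h2'
  have hs3 : Real.sinh t₃ = θ₃ * Real.cosh t₃ := sinh_artanh (by linarith) h3'
  have ht10 : 0 ≤ t₁ := artanh_nonneg h1 h1'
  have ht20 : 0 ≤ t₂ := artanh_nonneg h2 h2'
  have ht30 : 0 ≤ t₃ := artanh_nonneg h3 h3'
  set C := Real.cosh t₁ * (Real.cosh t₂ * Real.cosh t₃) with hCdef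
  have hCpos : 0 < C :=
    mul_pos (Real.cosh_pos t₁) (mul_pos (Real.cosh_pos t₂) (Real.cosh_pos t₃))
  set x := t₁ + σ * t₂ + τ * t₃ with hxdef
  have hσs : Real.sinh (σ * t₂) = σ * Real.sinh t₂ := by
    rcases hσ with rfl | rfl <;> simp [Real.sinh_neg]
  have hσc : Real.cosh (σ * t₂) = Real.cosh t₂ := by
    rcases hσ with rfl | rfl <;> simp [Real.cosh_neg]
  have hτs : Real.sinh (τ * t₃) = τ * Real.sinh t₃ := by
    rcases hτ with rfl | rfl <;> simp [Real.sinh_neg]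
  have hτc : Real.cosh (τ * t₃) = Real.cosh t₃ := by
    rcases hτ with rfl | rfl <;> simp [Real.cosh_neg]
  have hsinh : Real.sinh x = C * N θ₁ θ₂ θ₃ σ τ := by
    rw [show x = t₁ + (σ * t₂ + τ * t₃) by rw [hxdef]; ring,
      Real.sinh_add, Real.cosh_add, Real.sinh_add, hσs, hσc, hτs, hτc, hs1, hs2, hs3]
    simp only [N, hCdef]
    ring
  have hcosh : Real.cosh x = C * D 1 θ₁ θ₂ θ₃ σ τ := by
    rw [show x = t₁ + (σ * t₂ + τ * t₃) by rw [hxdef]; ring,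
      Real.cosh_add, Real.cosh_add, Real.sinh_add, hσs, hσc, hτs, hτc, hs1, hs2, hs3]
    simp only [D, hCdef]
    ring
  have hD : D lam θ₁ θ₂ θ₃ σ τ = (1 - lam) + lam * D 1 θ₁ θ₂ θ₃ σ τ := by
    simp only [D]; ring
  have hD1pos : 0 < D 1 θ₁ θ₂ θ₃ σ τ := by
    have hCD : D 1 θ₁ θ₂ θ₃ σ τ = Real.cosh x / C := by
      rw [hcosh]; field_simp
    rw [hCD]; exact div_pos (Real.cosh_pos x) hCpos
  have hDpos : 0 < D lam θ₁ θ₂ θ₃ σ τ := by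
    rw [hD]
    have hp := mul_pos hl0 hD1pos
    linarith
  -- sinh bound on the "all-plus" combination
  have hB : Real.sinh (t₁ + t₂ + t₃) ≤ (t₁ + t₂ + t₃) * C := by
    have hid : Real.sinh (t₁ + t₂ + t₃) = C * (θ₁ + θ₂ + θ₃ + θ₁ * θ₂ * θ₃) := by
      rw [show t₁ + t₂ + t₃ = t₁ + (t₂ + t₃) by ring, Real.sinh_add, Real.cosh_add,
        Real.sinh_add, hs1, hs2, hs3]
      simp only [hCdef]
      ring
    have hsum : θ₁ + θ₂ + θ₃ + θ₁ * θ₂ * θ₃ ≤ t₁ + t₂ + t₃ := by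
      rw [ht₁, ht₂, ht₃]; exact theta_sum_le h1 h1' h2 h2' h3 h3'
    rw [hid]
    calc C * (θ₁ + θ₂ + θ₃ + θ₁ * θ₂ * θ₃) ≤ C * (t₁ + t₂ + t₃) :=
        mul_le_mul_of_nonneg_left hsum hCpos.le
      _ = (t₁ + t₂ + t₃) * C := by ring
  have hT0 : 0 ≤ t₁ + t₂ + t₃ := by linarith
  have hxub : x ≤ t₁ + t₂ + t₃ := by
    rcases hσ with rfl | rfl <;> rcases hτ with rfl | rfl <;> rw [hxdef] <;> linarith
  have hxlb : -(t₁ + t₂ + t₃) ≤ x := by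
    rcases hσ with rfl | rfl <;> rcases hτ with rfl | rfl <;> rw [hxdef] <;> linarith
  have key : ∀ u : ℝ, 0 ≤ u → u ≤ t₁ + t₂ + t₃ → Real.sinh u ≤ u * C := by
    intro u hu huT
    rcases eq_or_lt_of_le hT0 with hT | hT
    · have hu0 : u = 0 := le_antisymm (by linarith) hu
      simp [hu0]
    · have hconv := conv_sinh hu huT
      have hmul : (t₁ + t₂ + t₃) * Real.sinh u ≤ (t₁ + t₂ + t₃) * (u * C) := by
        calc (t₁ + t₂ + t₃) * Real.sinh u ≤ u * Real.sinh (t₁ + t₂ + t₃) := hconv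
          _ ≤ u * ((t₁ + t₂ + t₃) * C) := mul_le_mul_of_nonneg_left hB hu
          _ = (t₁ + t₂ + t₃) * (u * C) := by ring
      exact le_of_mul_le_mul_left hmul hT
  set Nv := N θ₁ θ₂ θ₃ σ τ with hNv
  set Dv := D lam θ₁ θ₂ θ₃ σ τ with hDv
  have hclt : Real.sinh (lam * x) / Real.cosh (lam * x) < 1 := by
    rw [div_lt_one (Real.cosh_pos _)]
    linarith [Real.cosh_sub_sinh (lam * x), Real.exp_pos (-(lam * x))]
  have hcgt : (-1 : ℝ) < Real.sinh (lam * x) / Real.cosh (lam * x) := by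
    rw [lt_div_iff₀ (Real.cosh_pos _)]
    linarith [Real.cosh_add_sinh (lam * x), Real.exp_pos (lam * x)]
  rcases le_or_gt 0 x with hx0 | hx0
  · -- case x ≥ 0
    have hNveq : Nv = Real.sinh x / C := by
      rw [hsinh]; field_simp
    have hN0 : 0 ≤ Nv := by
      have hsp : 0 ≤ Real.sinh x := Real.sinh_nonneg_iff.mpr hx0
      rw [hNveq]; exact div_nonneg hsp hCpos.le
    have hsx : Real.sinh x ≤ x * C := key x hx0 hxub
    have hcore := core hl0.le hl1.le hx0 hCpos hsx
    have hsub : Real.sinh (x - lam * x)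
        = Real.sinh x * Real.cosh (lam * x) - Real.cosh x * Real.sinh (lam * x) :=
      Real.sinh_sub x (lam * x)
    have e1 : C * (lam * Nv * Real.cosh (lam * x))
        = lam * Real.sinh x * Real.cosh (lam * x) := by
      linear_combination (-(lam * Real.cosh (lam * x))) * hsinh
    have e2 : C * (Real.sinh (lam * x) * Dv)
        = (1 - lam) * C * Real.sinh (lam * x)
          + lam * Real.cosh x * Real.sinh (lam * x) := by
      rw [hD]
      linear_combination (-(lam * Real.sinh (lam * x))) * hcosh
    have e3 : lam * Real.sinh (x - lam * x)
        = lam * Real.sinh x * Real.cosh (lam * x)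
          - lam * Real.cosh x * Real.sinh (lam * x) := by rw [hsub]; ring
    have hmain : C * (lam * Nv * Real.cosh (lam * x))
        ≤ C * (Real.sinh (lam * x) * Dv) := by
      rw [e1, e2]; linarith
    have hfrac : lam * Nv / Dv ≤ Real.sinh (lam * x) / Real.cosh (lam * x) := by
      rw [div_le_div_iff₀ hDpos (Real.cosh_pos _)]
      exact le_of_mul_le_mul_left hmain hCpos
    have hnn : 0 ≤ lam * Nv / Dv := div_nonneg (mul_nonneg hl0.le hN0) hDpos.le
    have hart : artanh (lam * Nv / Dv) ≤ lam * x := by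
      have h := artanh_le_artanh_s5 (by linarith : (-1 : ℝ) < lam * Nv / Dv) hfrac hclt
      rwa [artanh_tanh] at h
    constructor
    · calc Nv * artanh (lam * Nv / Dv) ≤ Nv * (lam * x) :=
          mul_le_mul_of_nonneg_left hart hN0
        _ = lam * (Nv * (t₁ + σ * t₂ + τ * t₃)) := by rw [hxdef]; ring
    · intro hσ1 hτ1 hθpos
      subst hσ1; subst hτ1
      have hxpos : 0 < x := by
        have hts : 0 < t₁ + t₂ + t₃ := by
          rcases lt_or_ge 0 θ₁ with h | h
          · have := artanh_pos h h1'; linarith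
          · rcases lt_or_ge 0 θ₂ with h' | h'
            · have := artanh_pos h' h2'; linarith
            · have hp : 0 < θ₃ := by linarith
              have := artanh_pos hp h3'; linarith
        rw [hxdef]; linarith
      have hNpos : 0 < Nv := by
        have hsp : 0 < Real.sinh x := Real.sinh_pos_iff.mpr hxpos
        rw [hNveq]; exact div_pos hsp hCpos
      have hcore' := core_strict hl0 hl1 hxpos hCpos hsx
      have hmain' : C * (lam * Nv * Real.cosh (lam * x))
          < C * (Real.sinh (lam * x) * Dv) := by
        rw [e1, e2]; linarith
      have hfrac' : lam * Nv / Dv < Real.sinh (lam * x) / Real.cosh (lam * x) := by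
        rw [div_lt_div_iff₀ hDpos (Real.cosh_pos _)]
        exact lt_of_mul_lt_mul_left hmain' hCpos.le
      have hart' : artanh (lam * Nv / Dv) < lam * x := by
        have h := artanh_lt_artanh (by linarith : (-1 : ℝ) < lam * Nv / Dv) hfrac' hclt
        rwa [artanh_tanh] at h
      calc Nv * artanh (lam * Nv / Dv) < Nv * (lam * x) :=
          mul_lt_mul_of_pos_left hart' hNpos
        _ = lam * (Nv * (t₁ + 1 * t₂ + 1 * t₃)) := by rw [hxdef]; ring
  · -- case x < 0
    have hNveq : Nv = Real.sinh x / C := by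
      rw [hsinh]; field_simp
    have hN0 : Nv ≤ 0 := by
      have hsn : Real.sinh x < 0 := Real.sinh_neg_iff.mpr hx0
      rw [hNveq]; exact div_nonpos_of_nonpos_of_nonneg hsn.le hCpos.le
    have hy0 : 0 ≤ -x := by linarith
    have hyub : -x ≤ t₁ + t₂ + t₃ := by linarith
    have hsy : Real.sinh (-x) ≤ -x * C := key (-x) hy0 hyub
    have hcore := core hl0.le hl1.le hy0 hCpos hsy
    have hsub : Real.sinh (-x - lam * -x)
        = Real.sinh (-x) * Real.cosh (lam * -x) - Real.cosh (-x) * Real.sinh (lam * -x) :=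
      Real.sinh_sub (-x) (lam * -x)
    have hsX : Real.sinh (-x) = -Real.sinh x := Real.sinh_neg x
    have hcX : Real.cosh (-x) = Real.cosh x := Real.cosh_neg x
    have hslx : Real.sinh (lam * -x) = -Real.sinh (lam * x) := by
      rw [show lam * -x = -(lam * x) by ring, Real.sinh_neg]
    have hclx : Real.cosh (lam * -x) = Real.cosh (lam * x) := by
      rw [show lam * -x = -(lam * x) by ring, Real.cosh_neg]
    have e1 : C * (lam * Nv * Real.cosh (lam * x))
        = lam * Real.sinh x * Real.cosh (lam * x) := by
      linear_combination (-(lam * Real.cosh (lam * x))) * hsinh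
    have e2 : C * (Real.sinh (lam * x) * Dv)
        = (1 - lam) * C * Real.sinh (lam * x)
          + lam * Real.cosh x * Real.sinh (lam * x) := by
      rw [hD]
      linear_combination (-(lam * Real.sinh (lam * x))) * hcosh
    have e3 : lam * Real.sinh (-x - lam * -x)
        = -(lam * Real.sinh x * Real.cosh (lam * x))
          + lam * Real.cosh x * Real.sinh (lam * x) := by
      rw [hsub, hsX, hcX, hslx, hclx]; ring
    have hcore2 : lam * Real.sinh (-x - lam * -x)
        ≤ (1 - lam) * C * (-Real.sinh (lam * x)) := by
      have := hcore
      rw [show Real.sinh (lam * -x) = -Real.sinh (lam * x) from hslx] at this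
      linarith
    have hmain : C * (Real.sinh (lam * x) * Dv)
        ≤ C * (lam * Nv * Real.cosh (lam * x)) := by
      rw [e1, e2]; linarith
    have hfrac : Real.sinh (lam * x) / Real.cosh (lam * x) ≤ lam * Nv / Dv := by
      rw [div_le_div_iff₀ (Real.cosh_pos _) hDpos]
      have := le_of_mul_le_mul_left hmain hCpos
      linarith
    have hup : lam * Nv / Dv < 1 := by
      have hnum : lam * Nv ≤ 0 := mul_nonpos_of_nonneg_of_nonpos hl0.le hN0
      have : lam * Nv / Dv ≤ 0 := div_nonpos_of_nonpos_of_nonneg hnum hDpos.le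
      linarith
    have hart : lam * x ≤ artanh (lam * Nv / Dv) := by
      have h := artanh_le_artanh_s5 hcgt hfrac hup
      rwa [artanh_tanh] at h
    constructor
    · calc Nv * artanh (lam * Nv / Dv) ≤ Nv * (lam * x) :=
          mul_le_mul_of_nonpos_left hart hN0
        _ = lam * (Nv * (t₁ + σ * t₂ + τ * t₃)) := by rw [hxdef]; ring
    · intro hσ1 hτ1 hθpos
      exfalso
      subst hσ1; subst hτ1
      have hts : 0 < t₁ + t₂ + t₃ := by
        rcases lt_or_ge 0 θ₁ with h | h
        · have := artanh_pos h h1'; linarith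
        · rcases lt_or_ge 0 θ₂ with h' | h'
          · have := artanh_pos h' h2'; linarith
          · have hp : 0 < θ₃ := by linarith
            have := artanh_pos hp h3'; linarith
      have : 0 < x := by rw [hxdef]; linarith
      linarith

/-- Strictness claim of Lemma B.4 (Marwaha): for `λ ∈ (0,1)` and `θ₁, θ₂, θ₃ ∈ [0,1)`
with `max{θ₁,θ₂,θ₃} > 0`, the `r = 4` SKL contraction inequality is strict. -/
theorem stmt5 (lam θ₁ θ₂ θ₃ : ℝ) (hlam : lam ∈ Set.Ioo (0 : ℝ) 1)
    (hθ₁ : θ₁ ∈ Set.Ico (0 : ℝ) 1) (hθ₂ : θ₂ ∈ Set.Ico (0 : ℝ) 1)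
    (hθ₃ : θ₃ ∈ Set.Ico (0 : ℝ) 1) (hmax : 0 < max θ₁ (max θ₂ θ₃)) :
    (1 / 4) * ∑ s₂ ∈ ({-1, 1} : Finset ℝ), ∑ s₃ ∈ ({-1, 1} : Finset ℝ),
        N θ₁ θ₂ θ₃ s₂ s₃ * artanh (lam * N θ₁ θ₂ θ₃ s₂ s₃ / D lam θ₁ θ₂ θ₃ s₂ s₃)
      < lam * (θ₁ * artanh θ₁ + θ₂ * artanh θ₂ + θ₃ * artanh θ₃) := by
  obtain ⟨hl0, hl1⟩ := hlam
  obtain ⟨h1, h1'⟩ := hθ₁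
  obtain ⟨h2, h2'⟩ := hθ₂
  obtain ⟨h3, h3'⟩ := hθ₃
  have hθpos : 0 < θ₁ + θ₂ + θ₃ := by
    rcases lt_max_iff.mp hmax with h | h
    · linarith
    · rcases lt_max_iff.mp h with h' | h' <;> linarith
  have p11 := pat lam θ₁ θ₂ θ₃ 1 1 (Or.inl rfl) (Or.inl rfl) hl0 hl1 h1 h1' h2 h2' h3 h3'
  have p10 := (pat lam θ₁ θ₂ θ₃ 1 (-1) (Or.inl rfl) (Or.inr rfl)
    hl0 hl1 h1 h1' h2 h2' h3 h3').1
  have p01 := (pat lam θ₁ θ₂ θ₃ (-1) 1 (Or.inr rfl) (Or.inl rfl)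
    hl0 hl1 h1 h1' h2 h2' h3 h3').1
  have p00 := (pat lam θ₁ θ₂ θ₃ (-1) (-1) (Or.inr rfl) (Or.inr rfl)
    hl0 hl1 h1 h1' h2 h2' h3 h3').1
  have p11s := p11.2 rfl rfl hθpos
  rw [Finset.sum_pair (show (-1 : ℝ) ≠ 1 by norm_num)]
  rw [Finset.sum_pair (show (-1 : ℝ) ≠ 1 by norm_num)]
  rw [Finset.sum_pair (show (-1 : ℝ) ≠ 1 by norm_num)]
  have hid : lam * (N θ₁ θ₂ θ₃ (-1) (-1) * (artanh θ₁ + (-1) * artanh θ₂ + (-1) * artanh θ₃))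
      + lam * (N θ₁ θ₂ θ₃ (-1) 1 * (artanh θ₁ + (-1) * artanh θ₂ + 1 * artanh θ₃))
      + lam * (N θ₁ θ₂ θ₃ 1 (-1) * (artanh θ₁ + 1 * artanh θ₂ + (-1) * artanh θ₃))
      + lam * (N θ₁ θ₂ θ₃ 1 1 * (artanh θ₁ + 1 * artanh θ₂ + 1 * artanh θ₃))
      = 4 * (lam * (θ₁ * artanh θ₁ + θ₂ * artanh θ₂ + θ₃ * artanh θ₃)) := by
    simp only [N]; ring
  linarith
end

section
/- Let λ ∈ [1/5, 1] be real and i ≥ 2 an integer. Then (i−1)·( λ + (1−λ)·2^{2−i} ) ≤ i·( λ + (1−λ)·2^{1−i} ); equivalently, (i−1)/(λ + (1−λ)·2^{1−i}) ≤ i/(λ + (1−λ)·2^{2−i}). Moreover, the inequality is strict whenever i = 2 or i ≥ 5. -/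
lemma two_mul_le_two_pow (n : ℕ) : 2 * n ≤ 2 ^ n := by
  induction n with
  | zero => simp
  | succ k ih =>
    rcases Nat.eq_zero_or_pos k with hk | hk
    · subst hk; norm_num
    · have h2 : 2 ≤ 2 ^ k := by
        calc 2 = 2 ^ 1 := rfl
        _ ≤ 2 ^ k := Nat.pow_le_pow_right (by norm_num) hk
      calc 2 * (k + 1) = 2 * k + 2 := by ring
      _ ≤ 2 ^ k + 2 ^ k := Nat.add_le_add ih h2
      _ = 2 ^ (k + 1) := by ring

lemma two_mul_lt_two_pow (n : ℕ) (hn : 3 ≤ n) : 2 * n < 2 ^ n := by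
  induction n with
  | zero => omega
  | succ k ih =>
    rcases Nat.lt_or_ge k 3 with hk | hk
    · interval_cases k <;> (revert hn; norm_num)
    · have h2 : 2 ≤ 2 ^ k := by
        calc 2 = 2 ^ 1 := rfl
        _ ≤ 2 ^ k := Nat.pow_le_pow_right (by norm_num) (by omega)
      have := ih hk
      calc 2 * (k + 1) = 2 * k + 2 := by ring
      _ < 2 ^ k + 2 ^ k := by omega
      _ = 2 ^ (k + 1) := by ring

lemma key_aux (i : ℤ) (hi : 2 ≤ i) :
    ((i : ℝ) - 2) * (2 : ℝ) ^ (1 - i) ≤ 1 / 4 ∧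
      (5 ≤ i → ((i : ℝ) - 2) * (2 : ℝ) ^ (1 - i) < 1 / 4) := by
  set n : ℕ := (i - 2).toNat with hn
  have hin : i = (n : ℤ) + 2 := by omega
  have hcast : ((i : ℝ) - 2) = (n : ℝ) := by
    rw [hin]; push_cast; ring
  have hpow : (2 : ℝ) ^ (1 - i) = ((2 : ℝ) ^ (n + 1))⁻¹ := by
    rw [hin]
    rw [show (1 : ℤ) - ((n : ℤ) + 2) = -((n : ℤ) + 1) by ring]
    rw [zpow_neg]
    norm_num
    rw [show ((n : ℤ) + 1) = ((n + 1 : ℕ) : ℤ) by push_cast; ring]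
    rw [zpow_natCast]
  have hposp : (0 : ℝ) < (2 : ℝ) ^ (n + 1) := by positivity
  have hle : (2 * n : ℝ) ≤ (2 : ℝ) ^ n := by
    have := two_mul_le_two_pow n
    calc (2 * n : ℝ) = ((2 * n : ℕ) : ℝ) := by push_cast; ring
    _ ≤ ((2 ^ n : ℕ) : ℝ) := by exact_mod_cast this
    _ = (2 : ℝ) ^ n := by push_cast; ring
  constructor
  · rw [hcast, hpow]
    rw [mul_inv_le_iff₀ hposp]
    have : (2:ℝ) ^ (n+1) = 2 * 2 ^ n := by ring
    nlinarith [hle]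
  · intro h5
    have hn3 : 3 ≤ n := by omega
    have hlt : (2 * n : ℝ) < (2 : ℝ) ^ n := by
      have := two_mul_lt_two_pow n hn3
      calc (2 * n : ℝ) = ((2 * n : ℕ) : ℝ) := by push_cast; ring
      _ < ((2 ^ n : ℕ) : ℝ) := by exact_mod_cast this
      _ = (2 : ℝ) ^ n := by push_cast; ring
    rw [hcast, hpow]
    rw [mul_inv_lt_iff₀ hposp]
    have h21 : (2:ℝ) ^ (n+1) = 2 * 2 ^ n := by ring
    nlinarith [hlt]

/-- Key termwise comparison in the proof of Lemma 4.3: for `λ ∈ [1/5, 1]` and integer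
`i ≥ 2`, `(i−1)·(λ + (1−λ)·2^{2−i}) ≤ i·(λ + (1−λ)·2^{1−i})`; equivalently
`(i−1)/(λ + (1−λ)·2^{1−i}) ≤ i/(λ + (1−λ)·2^{2−i})`. The inequality is strict whenever
`i = 2` or `i ≥ 5`. -/
theorem stmt9 (lam : ℝ) (hlam : lam ∈ Set.Icc (1 / 5 : ℝ) 1) (i : ℤ) (hi : 2 ≤ i) :
    ((i : ℝ) - 1) * (lam + (1 - lam) * (2 : ℝ) ^ (2 - i))
        ≤ (i : ℝ) * (lam + (1 - lam) * (2 : ℝ) ^ (1 - i)) ∧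
      ((i : ℝ) - 1) / (lam + (1 - lam) * (2 : ℝ) ^ (1 - i))
        ≤ (i : ℝ) / (lam + (1 - lam) * (2 : ℝ) ^ (2 - i)) ∧
      ((i = 2 ∨ 5 ≤ i) →
        ((i : ℝ) - 1) * (lam + (1 - lam) * (2 : ℝ) ^ (2 - i))
          < (i : ℝ) * (lam + (1 - lam) * (2 : ℝ) ^ (1 - i))) := by
  obtain ⟨hl1, hl2⟩ := hlam
  set t : ℝ := (2 : ℝ) ^ (1 - i) with ht
  have htpos : 0 < t := by positivity
  have h2t : (2 : ℝ) ^ (2 - i) = 2 * t := by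
    rw [ht, show (2 : ℤ) - i = 1 + (1 - i) by ring, zpow_add₀ (by norm_num : (2:ℝ) ≠ 0)]
    norm_num
  obtain ⟨hkey, hkeys⟩ := key_aux i hi
  have hi2 : (2 : ℝ) ≤ (i : ℝ) := by exact_mod_cast hi
  have hmain : ((i : ℝ) - 1) * (lam + (1 - lam) * (2 * t))
      ≤ (i : ℝ) * (lam + (1 - lam) * t) := by
    nlinarith [mul_nonneg (mul_nonneg (by linarith : (0:ℝ) ≤ 1 - lam) (by linarith : (0:ℝ) ≤ (i:ℝ) - 2)) htpos.le, hkey]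
  have hden1 : 0 < lam + (1 - lam) * t := by nlinarith
  have hden2 : 0 < lam + (1 - lam) * (2 * t) := by nlinarith
  refine ⟨by rw [h2t]; exact hmain, ?_, ?_⟩
  · rw [h2t, div_le_div_iff₀ hden1 hden2]
    nlinarith [hmain]
  · rintro (h2 | h5)
    · subst h2
      rw [h2t]
      have : t = (1 : ℝ) / 2 := by
        rw [ht]; norm_num
      rw [this]; push_cast; nlinarith
    · rw [h2t]
      have hkey' := hkeys h5
      rw [← ht] at hkey'
      have hprod : (0:ℝ) ≤ ((i:ℝ) - 2) * t := mul_nonneg (by linarith) htpos.le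
      nlinarith [mul_lt_mul_of_pos_left hkey' (show (0:ℝ) < 4 * lam by linarith),
        mul_nonneg (show (0:ℝ) ≤ 5 * lam - 1 by linarith) hprod]
end

section
/- Let r ≥ 2 be an integer and θ : Fin (r−1) → ℝ. Then Σ_{x ∈ ({−1,1})^{Fin (r−1)}} ( Π_{j} (1 + θ_j·x_j) − Π_{j} (1 − θ_j·x_j) )² = 2^r · ( Π_{j} (1 + θ_j²) − Π_{j} (1 − θ_j²) ), where the sum is over all sign vectors x with entries in {−1, +1} and all products are over j ∈ Fin (r−1). -/
lemma sum_prod_units {n : ℕ} (f : Fin n → ℤˣ → ℝ) :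
    ∑ x : Fin n → ℤˣ, ∏ j, f j (x j) = ∏ j, ∑ u : ℤˣ, f j u := by
  classical
  rw [Finset.prod_univ_sum]
  rw [← Fintype.piFinset_univ]

lemma sum_units (g : ℤˣ → ℝ) : ∑ u : ℤˣ, g u = g 1 + g (-1) := by
  have h : (Finset.univ : Finset ℤˣ) = {1, -1} := by decide
  rw [h, Finset.sum_insert (by decide), Finset.sum_singleton]

/-- Polynomial identity from the proof of the large-degree asymptotics
(Lemma `proof-large-deg-step:per-hyperedge`): summing over all sign vectors
`x : Fin (r−1) → {±1}`, the squared difference of products satisfies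
`Σ_x (Π_j (1 + θ_j x_j) − Π_j (1 − θ_j x_j))² = 2^r · (Π_j (1 + θ_j²) − Π_j (1 − θ_j²))`.
Sign vectors are encoded as functions into `ℤˣ = {1, −1}`. -/
theorem stmt11 (r : ℕ) (hr : 2 ≤ r) (θ : Fin (r - 1) → ℝ) :
    ∑ x : Fin (r - 1) → ℤˣ,
        (∏ j, (1 + θ j * ((x j : ℤ) : ℝ)) - ∏ j, (1 - θ j * ((x j : ℤ) : ℝ))) ^ 2
      = 2 ^ r * (∏ j, (1 + θ j ^ 2) - ∏ j, (1 - θ j ^ 2)) := by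
  have expand : ∀ x : Fin (r - 1) → ℤˣ,
      (∏ j, (1 + θ j * ((x j : ℤ) : ℝ)) - ∏ j, (1 - θ j * ((x j : ℤ) : ℝ))) ^ 2
      = (∏ j, (1 + θ j * ((x j : ℤ) : ℝ)) ^ 2)
        + (∏ j, (1 - θ j * ((x j : ℤ) : ℝ)) ^ 2)
        - 2 * ∏ j, ((1 + θ j * ((x j : ℤ) : ℝ)) * (1 - θ j * ((x j : ℤ) : ℝ))) := by
    intro x
    rw [Finset.prod_pow, Finset.prod_pow, Finset.prod_mul_distrib]
    ring
  simp only [expand]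
  rw [Finset.sum_sub_distrib, Finset.sum_add_distrib, ← Finset.mul_sum]
  rw [sum_prod_units (fun j u => (1 + θ j * ((u : ℤ) : ℝ)) ^ 2),
    sum_prod_units (fun j u => (1 - θ j * ((u : ℤ) : ℝ)) ^ 2),
    sum_prod_units (fun j u => (1 + θ j * ((u : ℤ) : ℝ)) * (1 - θ j * ((u : ℤ) : ℝ)))]
  have h1 : ∀ j, ∑ u : ℤˣ, (1 + θ j * ((u : ℤ) : ℝ)) ^ 2 = 2 * (1 + θ j ^ 2) := by
    intro j; rw [sum_units]; push_cast; ring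
  have h2 : ∀ j, ∑ u : ℤˣ, (1 - θ j * ((u : ℤ) : ℝ)) ^ 2 = 2 * (1 + θ j ^ 2) := by
    intro j; rw [sum_units]; push_cast; ring
  have h3 : ∀ j, ∑ u : ℤˣ, (1 + θ j * ((u : ℤ) : ℝ)) * (1 - θ j * ((u : ℤ) : ℝ))
      = 2 * (1 - θ j ^ 2) := by
    intro j; rw [sum_units]; push_cast; ring
  simp only [h1, h2, h3]
  rw [Finset.prod_mul_distrib, Finset.prod_mul_distrib,
    Finset.prod_const, Finset.card_univ, Fintype.card_fin]
  have hpow : (2:ℝ) ^ r = 2 * 2 ^ (r - 1) := by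
    rw [← pow_succ']
    congr 1
    omega
  rw [hpow]
  ring
end
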